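/- For all integers d ≥ 1, 0 ≤ k ≤ d and 0 ≤ j ≤ d, the refined Eulerian number satisfies A_{d+1,k,d-j+1} = Σ_{i=0}^{k} (-1)^i · C(d+1,i) · (k-i)^j · (k-i+1)^{d-j}, where A_{d+1,k,d-j+1} is defined as the coefficient of λ^j in d!·(λ+1)^d·B_{d+1}(k + 1/(λ+1)), divided by C(d,j). -/

import Mathlib

open MeasureTheory Polynomial

/-- B-splines: `B 1` is the indicator of `[0,1)`, and `B d x = ∫_0^1 B (d-1) (x - t) dt`. -/
noncomputable def B : ℕ → ℝ → ℝ
  | 0, _ => 0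
  | 1, x => if 0 ≤ x ∧ x < 1 then 1 else 0
  | d + 2, x => ∫ t in (0:ℝ)..(1:ℝ), B (d + 1) (x - t)


lemma maxpow_hasDerivAt (n : ℕ) (hn : 1 ≤ n) (x : ℝ) :
    HasDerivAt (fun y : ℝ => max y 0 ^ (n + 1)) ((n + 1 : ℝ) * max x 0 ^ n) x := by
  rcases lt_trichotomy x 0 with hx | hx | hx
  · have h0 : HasDerivAt (fun _ : ℝ => (0:ℝ)) 0 x := hasDerivAt_const x 0
    have : ((n + 1 : ℝ) * max x 0 ^ n) = 0 := by
      rw [max_eq_right hx.le, zero_pow (by omega)]; ring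
    rw [this]
    apply h0.congr_of_eventuallyEq
    filter_upwards [eventually_lt_nhds hx] with y hy
    rw [max_eq_right hy.le, zero_pow (by omega)]
  · subst hx
    have : ((n + 1 : ℝ) * max 0 0 ^ n) = 0 := by simp [zero_pow (by omega : n ≠ 0)]
    rw [this]
    rw [hasDerivAt_iff_isLittleO]
    simp only [sub_zero, smul_zero, sub_zero, max_self, zero_pow (by omega : n + 1 ≠ 0)]
    rw [Asymptotics.isLittleO_iff]
    intro c hc
    rw [Metric.eventually_nhds_iff]
    refine ⟨min c 1, by positivity, fun {y} hy => ?_⟩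
    rw [Real.dist_eq, sub_zero] at hy
    have h1 : |y| ≤ 1 := le_of_lt (lt_of_lt_of_le hy (min_le_right _ _))
    have h2 : |y| ≤ c := le_of_lt (lt_of_lt_of_le hy (min_le_left _ _))
    have hm : max y 0 ≤ |y| := max_le (le_abs_self y) (abs_nonneg y)
    have hm0 : (0:ℝ) ≤ max y 0 := le_max_right _ _
    calc ‖max y 0 ^ (n+1)‖ = max y 0 ^ (n+1) := by
            rw [Real.norm_eq_abs, abs_of_nonneg (by positivity)]
      _ ≤ |y| ^ (n+1) := pow_le_pow_left₀ hm0 hm _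
      _ ≤ |y| ^ 2 := pow_le_pow_of_le_one (abs_nonneg y) h1 (by omega)
      _ = |y| * |y| := sq |y| ▸ by ring
      _ ≤ c * |y| := by nlinarith [abs_nonneg y]
      _ = c * ‖y‖ := by rw [Real.norm_eq_abs]
  · have h0 := hasDerivAt_pow (n+1) x
    rw [max_eq_left hx.le]
    have : ((n + 1 : ℝ) * x ^ n) = (↑(n+1) * x ^ (n + 1 - 1)) := by push_cast; simp
    rw [this]
    apply h0.congr_of_eventuallyEq
    filter_upwards [eventually_gt_nhds hx] with y hy
    rw [max_eq_left hy.le]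

lemma integral_maxpow (n : ℕ) (hn : 1 ≤ n) (a : ℝ) :
    ∫ t in (0:ℝ)..1, max (a - t) 0 ^ n =
      (max a 0 ^ (n + 1) - max (a - 1) 0 ^ (n + 1)) / (n + 1) := by
  have hderiv : ∀ t ∈ Set.uIcc (0:ℝ) 1,
      HasDerivAt (fun t : ℝ => -(max (a - t) 0 ^ (n + 1)) / (n + 1))
        (max (a - t) 0 ^ n) t := by
    intro t _
    have hin : HasDerivAt (fun t : ℝ => a - t) (-1) t := by
      simpa using (hasDerivAt_id t).const_sub a
    have hout := (maxpow_hasDerivAt n hn (a - t)).comp t hin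
    have := (hout.neg).div_const ((n:ℝ) + 1)
    have hv : -(((n:ℝ) + 1) * max (a - t) 0 ^ n * -1) / ((n:ℝ) + 1) = max (a - t) 0 ^ n := by
      have : ((n:ℝ) + 1) ≠ 0 := by positivity
      rw [div_eq_iff this]; ring
    rw [hv] at this
    exact this
  have hint : IntervalIntegrable (fun t : ℝ => max (a - t) 0 ^ n) volume 0 1 :=
    (((continuous_const.sub continuous_id).max continuous_const).pow n).intervalIntegrable 0 1
  have := intervalIntegral.integral_eq_sub_of_hasDerivAt hderiv hint
  rw [this]
  ring


lemma step_intervalIntegrable (c : ℝ) :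
    IntervalIntegrable (fun t : ℝ => if t ≤ c then (1:ℝ) else 0) volume 0 1 := by
  have : (fun t : ℝ => if t ≤ c then (1:ℝ) else 0)
      = Set.indicator (Set.Iic c) (fun _ => (1:ℝ)) := by
    ext t; simp [Set.indicator, Set.mem_Iic]
  rw [this, intervalIntegrable_iff_integrableOn_Ioc_of_le (by norm_num)]
  exact (integrableOn_const measure_Ioc_lt_top.ne).indicator measurableSet_Iic

lemma step_integral (c : ℝ) :
    ∫ t in (0:ℝ)..1, (if t ≤ c then (1:ℝ) else 0) = min (max c 0) 1 := by
  rw [intervalIntegral.integral_of_le (by norm_num : (0:ℝ) ≤ 1)]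
  have h1 : (fun t : ℝ => if t ≤ c then (1:ℝ) else 0)
      = Set.indicator (Set.Iic c) (fun _ => (1:ℝ)) := by
    ext t; simp [Set.indicator, Set.mem_Iic]
  rw [h1, MeasureTheory.setIntegral_indicator measurableSet_Iic]
  have h2 : Set.Ioc (0:ℝ) 1 ∩ Set.Iic c = Set.Ioc 0 (min 1 c) := by
    ext t; simp [Set.mem_Ioc, Set.mem_Iic, and_assoc, and_comm, lt_min_iff, le_min_iff]
  rw [h2]
  rw [MeasureTheory.setIntegral_const, measureReal_def, Real.volume_Ioc, smul_eq_mul, mul_one, sub_zero]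
  rcases le_total c 0 with h | h
  · rw [min_eq_right (h.trans zero_le_one), max_eq_right h, min_eq_left zero_le_one,
      ENNReal.ofReal_of_nonpos h, ENNReal.toReal_zero]
  · rw [max_eq_left h]
    rcases le_total c 1 with h' | h'
    · rw [min_eq_right h', min_eq_left h', ENNReal.toReal_ofReal h]
    · rw [min_eq_left h', min_eq_right h', ENNReal.toReal_ofReal (by norm_num)]

lemma B_two (x : ℝ) : B 2 x = min (max x 0) 1 - min (max (x - 1) 0) 1 := by
  have hB1 : ∀ y : ℝ, B 1 y = (if 0 ≤ y then (1:ℝ) else 0) - (if 1 ≤ y then (1:ℝ) else 0) := by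
    intro y
    show (if 0 ≤ y ∧ y < 1 then (1:ℝ) else 0) = _
    by_cases h0 : 0 ≤ y
    · by_cases h1 : y < 1
      · rw [if_pos ⟨h0, h1⟩, if_pos h0, if_neg (by linarith)]; norm_num
      · rw [if_neg (fun hc => h1 hc.2), if_pos h0, if_pos (by linarith)]; norm_num
    · rw [if_neg (fun hc => h0 hc.1), if_neg h0, if_neg (by push_neg at h0 ⊢; linarith)]; norm_num
  show (∫ t in (0:ℝ)..1, B 1 (x - t)) = _
  have : ∀ t : ℝ, B 1 (x - t)
      = (if t ≤ x then (1:ℝ) else 0) - (if t ≤ x - 1 then (1:ℝ) else 0) := by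
    intro t
    rw [hB1]
    congr 1 <;> (apply if_congr _ rfl rfl; constructor <;> intro <;> linarith)
  rw [intervalIntegral.integral_congr (fun t _ => this t)]
  rw [intervalIntegral.integral_sub (step_intervalIntegrable x) (step_intervalIntegrable (x-1))]
  rw [step_integral, step_integral]

lemma min_max_eq (y : ℝ) : min (max y 0) 1 = max y 0 - max (y - 1) 0 := by
  rcases le_total y 0 with h | h <;> rcases le_total y 1 with h1 | h1 <;>
    simp [max_def, min_def] <;> split_ifs <;> linarith

lemma pascal_sum (n : ℕ) (m : ℕ → ℝ) :
    ∑ i ∈ Finset.range (n+1), (-1:ℝ)^i * (n.choose i) * (m i - m (i+1))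
      = ∑ i ∈ Finset.range (n+2), (-1:ℝ)^i * ((n+1).choose i) * m i := by
  have e1 := Finset.sum_range_succ' (fun i => (-1:ℝ)^i * ((n+1).choose i) * m i) (n+1)
  have e2 := Finset.sum_range_succ' (fun i => (-1:ℝ)^i * (n.choose i) * m i) (n+1)
  have e3 := Finset.sum_range_succ (fun i => (-1:ℝ)^i * (n.choose i) * m i) (n+1)
  have hz : ((-1:ℝ)^(n+1) * (n.choose (n+1)) * m (n+1)) = 0 := by
    simp [Nat.choose_succ_self]
  rw [e1]
  have e4 : ∀ i ∈ Finset.range (n+1),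
      (-1:ℝ)^(i+1) * ((n+1).choose (i+1)) * m (i+1)
        = -((-1:ℝ)^i * (n.choose i) * m (i+1))
          + (-1:ℝ)^(i+1) * (n.choose (i+1)) * m (i+1) := by
    intro i _
    rw [Nat.choose_succ_succ]
    push_cast
    ring
  rw [Finset.sum_congr rfl e4, Finset.sum_add_distrib, Finset.sum_neg_distrib]
  simp only [mul_sub, Finset.sum_sub_distrib]
  have e5 : ∑ i ∈ Finset.range (n+1), (-1:ℝ)^(i+1) * (n.choose (i+1)) * m (i+1)
      = (∑ i ∈ Finset.range (n+1), (-1:ℝ)^i * (n.choose i) * m i) - m 0 := by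
    have := e2.symm.trans e3
    simp only [hz, add_zero] at this ⊢
    have h0 : ((-1:ℝ)^0 * (n.choose 0) * m 0) = m 0 := by simp
    linarith [this]
  rw [e5]
  simp only [pow_zero, Nat.choose_zero_right, Nat.cast_one, one_mul]
  ring


lemma B_closed (d : ℕ) (hd : 1 ≤ d) : ∀ x : ℝ,
    (d.factorial : ℝ) * B (d+1) x =
      ∑ i ∈ Finset.range (d+2), (-1:ℝ)^i * ((d+1).choose i : ℝ) * max (x - (i:ℝ)) 0 ^ d := by
  induction d, hd using Nat.le_induction with
  | base =>
    intro x
    rw [show ((1:ℕ).factorial : ℝ) = 1 by norm_num, one_mul, B_two x,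
      min_max_eq, min_max_eq]
    simp [Finset.sum_range_succ]
    norm_num
    ring
  | succ d hd ih =>
    intro x
    have hB : B (d+2) x = ∫ t in (0:ℝ)..1, B (d+1) (x - t) := by simp only [B]
    have key : ∀ t : ℝ, (d.factorial : ℝ) * B (d+1) (x - t)
        = ∑ i ∈ Finset.range (d+2),
            (-1:ℝ)^i * ((d+1).choose i : ℝ) * max ((x - (i:ℝ)) - t) 0 ^ d := by
      intro t
      rw [ih (x - t)]
      exact Finset.sum_congr rfl (fun i _ => by rw [sub_right_comm])
    have hcont : ∀ i : ℕ, IntervalIntegrable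
        (fun t => (-1:ℝ)^i * ((d+1).choose i : ℝ) * max ((x - (i:ℝ)) - t) 0 ^ d)
        volume 0 1 := fun i =>
      ((continuous_const.mul
        (((continuous_const.sub continuous_id).max continuous_const).pow d))).intervalIntegrable 0 1
    have hne : ((d:ℝ) + 1) ≠ 0 := by positivity
    calc ((d+1).factorial : ℝ) * B (d+1+1) x
        = ((d:ℝ)+1) * ((d.factorial : ℝ) * ∫ t in (0:ℝ)..1, B (d+1) (x - t)) := by
          rw [hB, Nat.factorial_succ]; push_cast; ring
      _ = ((d:ℝ)+1) * ∫ t in (0:ℝ)..1, (d.factorial : ℝ) * B (d+1) (x - t) := by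
          rw [intervalIntegral.integral_const_mul]
      _ = ((d:ℝ)+1) * ∫ t in (0:ℝ)..1, ∑ i ∈ Finset.range (d+2),
            (-1:ℝ)^i * ((d+1).choose i : ℝ) * max ((x - (i:ℝ)) - t) 0 ^ d := by
          rw [intervalIntegral.integral_congr (fun t _ => key t)]
      _ = ((d:ℝ)+1) * ∑ i ∈ Finset.range (d+2), ∫ t in (0:ℝ)..1,
            (-1:ℝ)^i * ((d+1).choose i : ℝ) * max ((x - (i:ℝ)) - t) 0 ^ d := by
          rw [intervalIntegral.integral_finset_sum (fun i _ => hcont i)]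
      _ = ∑ i ∈ Finset.range (d+2), (-1:ℝ)^i * ((d+1).choose i : ℝ) *
            (max (x - (i:ℝ)) 0 ^ (d+1) - max (x - ((i:ℕ)+1:ℕ) : ℝ) 0 ^ (d+1)) := by
          rw [Finset.mul_sum]
          apply Finset.sum_congr rfl
          intro i _
          rw [intervalIntegral.integral_const_mul, integral_maxpow d hd]
          push_cast
          rw [show x - ((i:ℝ)+1) = x - (i:ℝ) - 1 by ring]
          field_simp
      _ = ∑ i ∈ Finset.range (d+3), (-1:ℝ)^i * ((d+2).choose i : ℝ) *
            max (x - (i:ℝ)) 0 ^ (d+1) :=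
          pascal_sum (d+1) (fun i => max (x - (i:ℝ)) 0 ^ (d+1))


lemma coeff_linear_pow (a b : ℝ) (d j : ℕ) (hj : j ≤ d) :
    ((C a * X + C b) ^ d).coeff j = (d.choose j : ℝ) * a ^ j * b ^ (d - j) := by
  rw [add_pow, finset_sum_coeff]
  have : ∀ m ∈ Finset.range (d+1),
      ((C a * X) ^ m * C b ^ (d - m) * (d.choose m : ℝ[X])).coeff j
        = if m = j then (d.choose j : ℝ) * a ^ j * b ^ (d - j) else 0 := by
    intro m _
    have h1 : (C a * X) ^ m * C b ^ (d - m) * (d.choose m : ℝ[X])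
        = C (a ^ m * b ^ (d - m) * (d.choose m : ℝ)) * X ^ m := by
      rw [mul_pow, ← C_pow, ← C_pow, ← C_eq_natCast, C_mul, C_mul]
      ring
    rw [h1, coeff_C_mul, coeff_X_pow]
    split_ifs with h h' h'
    · subst h'; rw [mul_one]; ring
    · exact absurd h.symm h'
    · exact absurd h'.symm h
    · rw [mul_zero]
  rw [Finset.sum_congr rfl this, Finset.sum_ite_eq' (Finset.range (d+1)) j]
  rw [if_pos (Finset.mem_range.mpr (by omega))]

theorem refined_eulerian_formula (d k j : ℕ) (hd : 1 ≤ d) (hk : k ≤ d) (hj : j ≤ d)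
    (p : Polynomial ℝ)
    (hp : ∀ lam : ℝ, 0 ≤ lam →
      Polynomial.eval lam p =
        (Nat.factorial d : ℝ) * (lam + 1) ^ d * B (d + 1) ((k : ℝ) + 1 / (lam + 1))) :
    p.coeff j / (d.choose j : ℝ) =
      ∑ i ∈ Finset.range (k + 1), (-1 : ℝ) ^ i * ((d + 1).choose i : ℝ) *
        ((k : ℝ) - i) ^ j * ((k : ℝ) - i + 1) ^ (d - j) := by
  set q : ℝ[X] := ∑ i ∈ Finset.range (k+1),
    C ((-1:ℝ)^i * ((d+1).choose i : ℝ)) *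
      (C ((k:ℝ) - i) * X + C ((k:ℝ) - i + 1)) ^ d with hq
  have heval : ∀ lam : ℝ, 0 ≤ lam → p.eval lam = q.eval lam := by
    intro lam hlam
    have h1 : (0:ℝ) < lam + 1 := by linarith
    rw [hp lam hlam,
      show (d.factorial:ℝ) * (lam+1)^d * B (d+1) ((k:ℝ)+1/(lam+1))
        = (lam+1)^d * ((d.factorial:ℝ) * B (d+1) ((k:ℝ)+1/(lam+1))) from by ring,
      B_closed d hd, Finset.mul_sum]
    have hsub : Finset.range (k+1) ⊆ Finset.range (d+2) :=
      Finset.range_subset_range.mpr (by omega)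
    rw [← Finset.sum_subset hsub]
    · rw [hq, eval_finset_sum]
      apply Finset.sum_congr rfl
      intro i hi
      have hik : (i:ℝ) ≤ (k:ℝ) := by
        exact_mod_cast Nat.lt_succ_iff.mp (Finset.mem_range.mp hi)
      have hpos : (0:ℝ) < (k:ℝ) + 1/(lam+1) - i := by
        have : 0 < 1/(lam+1) := by positivity
        linarith
      rw [max_eq_left hpos.le]
      simp only [eval_mul, eval_pow, eval_add, eval_C, eval_X]
      have hv : ((k:ℝ) - i) * lam + ((k:ℝ) - i + 1) = (lam + 1) * ((k:ℝ) + 1/(lam+1) - i) := by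
        field_simp
        ring
      rw [hv, mul_pow]
      ring
    · intro i hi hni
      have hik : k + 1 ≤ i := by
        simp only [Finset.mem_range] at hi hni; omega
      have h2 : (k:ℝ) + 1 ≤ (i:ℝ) := by exact_mod_cast hik
      have h3 : 1/(lam+1) ≤ 1 := by
        rw [div_le_one h1]; linarith
      have : max ((k:ℝ) + 1/(lam+1) - i) 0 = 0 := max_eq_right (by linarith)
      rw [this, zero_pow (by omega : d ≠ 0), mul_zero, mul_zero]
  have hpq : p = q := by
    apply Polynomial.eq_of_infinite_eval_eq
    apply Set.Infinite.mono (s := Set.Ici (0:ℝ))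
    · exact fun x hx => heval x hx
    · exact Set.Ici_infinite 0
  have hcoeff : p.coeff j = ∑ i ∈ Finset.range (k+1),
      (-1:ℝ)^i * ((d+1).choose i : ℝ) *
        ((d.choose j : ℝ) * ((k:ℝ) - i) ^ j * ((k:ℝ) - i + 1) ^ (d - j)) := by
    rw [hpq, hq, finset_sum_coeff]
    apply Finset.sum_congr rfl
    intro i _
    rw [coeff_C_mul, coeff_linear_pow _ _ _ _ hj]
  have hC : (d.choose j : ℝ) ≠ 0 :=
    Nat.cast_ne_zero.mpr (Nat.choose_pos hj).ne'
  rw [hcoeff, Finset.sum_div]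
  apply Finset.sum_congr rfl
  intro i _
  field_simp
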